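/- Let g(y) := (−y³ + 2y² + y − 1)/(2y² + 4y − 3) and h(m₁,m₂) := (1 − m₁ − 2m₁² + m₁³ − m₂ + 4m₁²m₂ − 2m₁³m₂ − 2m₂² + 4m₁m₂² + m₂³ − 2m₁m₂³)/(3 − 4m₁ − 2m₁² − 4m₂ + 4m₁m₂ + 4m₁²m₂ − 2m₂² + 4m₁m₂²). For all reals m₁, m₂ with 0 ≤ m₂ ≤ m₁ < 1/2, if m₁ ≥ g(m₂) and m₂ ≥ g(m₁), then m₁ + m₂ + h(m₁,m₂) ≥ 1. -/
import Mathlib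


/-- `g(y) := (−y³ + 2y² + y − 1)/(2y² + 4y − 3)`. -/
noncomputable def g (y : ℝ) : ℝ := (-y^3 + 2*y^2 + y - 1) / (2*y^2 + 4*y - 3)

/-- `h(m₁,m₂)` from the proof of Claim 1. -/
noncomputable def h (m₁ m₂ : ℝ) : ℝ :=
  (1 - m₁ - 2*m₁^2 + m₁^3 - m₂ + 4*m₁^2*m₂ - 2*m₁^3*m₂ - 2*m₂^2 + 4*m₁*m₂^2
      + m₂^3 - 2*m₁*m₂^3) /
    (3 - 4*m₁ - 2*m₁^2 - 4*m₂ + 4*m₁*m₂ + 4*m₁^2*m₂ - 2*m₂^2 + 4*m₁*m₂^2)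

/-- If `0 ≤ m₂ ≤ m₁ < 1/2`, `m₁ ≥ g(m₂)` and `m₂ ≥ g(m₁)`, then
`m₁ + m₂ + h(m₁,m₂) ≥ 1`. -/
theorem sum_with_h_ge_one (m₁ m₂ : ℝ) (h0 : 0 ≤ m₂) (h1 : m₂ ≤ m₁) (h2 : m₁ < 1/2)
    (hg1 : g m₂ ≤ m₁) (hg2 : g m₁ ≤ m₂) :
    1 ≤ m₁ + m₂ + h m₁ m₂ := by
  have h0' : (0:ℝ) ≤ m₁ := le_trans h0 h1
  have h2' : m₂ < 1/2 := lt_of_le_of_lt h1 h2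
  have hd2 : 2*m₂^2 + 4*m₂ - 3 < 0 := by nlinarith
  have hd1 : 2*m₁^2 + 4*m₁ - 3 < 0 := by nlinarith
  have hP : 0 ≤ (-m₂^3 + 2*m₂^2 + m₂ - 1) - m₁ * (2*m₂^2 + 4*m₂ - 3) := by
    rw [g, div_le_iff_of_neg hd2] at hg1
    linarith
  have hQ : 0 ≤ (-m₁^3 + 2*m₁^2 + m₁ - 1) - m₂ * (2*m₁^2 + 4*m₁ - 3) := by
    rw [g, div_le_iff_of_neg hd1] at hg2
    linarith
  have hD : 0 < 3 - 4*m₁ - 2*m₁^2 - 4*m₂ + 4*m₁*m₂ + 4*m₁^2*m₂ - 2*m₂^2 + 4*m₁*m₂^2 := by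
    nlinarith [mul_nonneg h0 h0', sq_nonneg (m₁ - m₂), mul_pos (by linarith : (0:ℝ) < 1 - 2*m₁) (by linarith : (0:ℝ) < 1 - 2*m₂), mul_nonneg (mul_nonneg h0' h0) (by linarith : (0:ℝ) ≤ 1 - 2*m₂)]
  rw [h, ← sub_le_iff_le_add', show (1:ℝ) - (m₁ + m₂) = 1 - m₁ - m₂ by ring,
    le_div_iff₀ hD]
  nlinarith [hP, hQ, mul_nonneg hP (by linarith : (0:ℝ) ≤ 1 - 2*m₁), mul_nonneg hQ (by linarith : (0:ℝ) ≤ 1 - 2*m₂), mul_nonneg hP h0', mul_nonneg hQ h0, sq_nonneg (m₁ - m₂), mul_nonneg (mul_nonneg h0' h0) (by linarith : (0:ℝ) ≤ 1 - 2*m₂), mul_nonneg h0 h0', mul_nonneg hP h0, mul_nonneg hQ h0']
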